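/- Let N' be obtained from a network N by an E1 operation: adding a new reaction C -> D involving only species of N such that rk(N') = rk(N). If some linkage class of N contains both C and D, then delta(N') = delta(N); otherwise delta(N') = delta(N) + 1. -/

import Mathlib

open Submodule

/-- A complex on `s` species: a vector of nonnegative integers. -/
abbrev Cplx (s : ℕ) := Fin s → ℕ

/-- The real vector associated to a complex. -/
def toR {s : ℕ} (C : Cplx s) : Fin s → ℝ := fun i => (C i : ℝ)

/-- A chemical reaction network on `s` species, given by its set of reactions
(ordered pairs of distinct complexes). -/
structure Network (s : ℕ) where
  reactions : Finset (Cplx s × Cplx s)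
  ne : ∀ r ∈ reactions, r.1 ≠ r.2

namespace Network

variable {s : ℕ}

/-- The complexes of a network: all sources and targets of reactions. -/
def complexes (N : Network s) : Finset (Cplx s) :=
  N.reactions.image Prod.fst ∪ N.reactions.image Prod.snd

/-- One (undirected) step in the reaction graph. -/
def step (N : Network s) (C D : Cplx s) : Prop :=
  (C, D) ∈ N.reactions ∨ (D, C) ∈ N.reactions

/-- Being connected by a path in the undirected reaction graph. -/
def linked (N : Network s) : Cplx s → Cplx s → Prop :=
  Relation.ReflTransGen N.step

/-- `C` and `D` are complexes of `N` lying in a common linkage class. -/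
def sameLinkageClass (N : Network s) (C D : Cplx s) : Prop :=
  C ∈ N.complexes ∧ D ∈ N.complexes ∧ N.linked C D

/-- The linkage class of a complex `C`. -/
def linkageClass (N : Network s) (C : Cplx s) : Set (Cplx s) :=
  {D | N.linked C D}

/-- The number of complexes `c_N`. -/
def numComplexes (N : Network s) : ℕ := N.complexes.card

/-- The number of linkage classes `ℓ_N`. -/
noncomputable def numLinkage (N : Network s) : ℕ :=
  Set.ncard {S : Set (Cplx s) | ∃ C ∈ N.complexes, S = N.linkageClass C}

/-- The number of reactions `r_N`. -/
def numReactions (N : Network s) : ℕ := N.reactions.card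

/-- The stoichiometric subspace: the real span of all reaction vectors. -/
def stoichSubspace (N : Network s) : Submodule ℝ (Fin s → ℝ) :=
  Submodule.span ℝ {v | ∃ r ∈ N.reactions, v = toR r.2 - toR r.1}

/-- The rank of the network. -/
noncomputable def rank (N : Network s) : ℕ :=
  Module.finrank ℝ N.stoichSubspace

/-- The deficiency `δ(N) = c_N - ℓ_N - rk(N)`. -/
noncomputable def deficiency (N : Network s) : ℤ :=
  (N.numComplexes : ℤ) - N.numLinkage - N.rank

/-- The cyclomatic number `cyc(N) = r_N - c_N + ℓ_N`. -/
noncomputable def cyc (N : Network s) : ℤ :=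
  (N.numReactions : ℤ) - N.numComplexes + N.numLinkage

end Network

namespace Network

variable {s : ℕ}

lemma linked_symm {N : Network s} {X Y : Cplx s} (h : N.linked X Y) : N.linked Y X := by
  induction h with
  | refl => exact .refl
  | tail _ h2 ih => exact Relation.ReflTransGen.head h2.symm ih

lemma step_mem_right {N : Network s} {X Y : Cplx s} (h : N.step X Y) : Y ∈ N.complexes := by
  rcases h with h | h
  · exact Finset.mem_union_right _ (Finset.mem_image_of_mem Prod.snd h)
  · exact Finset.mem_union_left _ (Finset.mem_image_of_mem Prod.fst h)

lemma linked_mem {N : Network s} {X Y : Cplx s} (h : N.linked X Y) (hne : X ≠ Y) :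
    Y ∈ N.complexes := by
  rcases h.cases_tail with rfl | ⟨c, _, hstep⟩
  · exact absurd rfl hne
  · exact step_mem_right hstep

lemma mem_linkageClass_iff {N : Network s} {X Y : Cplx s} :
    Y ∈ N.linkageClass X ↔ N.linked X Y := Iff.rfl

lemma linkageClass_eq {N : Network s} {X Y : Cplx s} (h : N.linked X Y) :
    N.linkageClass X = N.linkageClass Y := by
  ext Z
  exact ⟨fun hz => (linked_symm h).trans hz, fun hz => h.trans hz⟩

lemma numLinkage_eq_image (N : Network s) :
    N.numLinkage = (N.linkageClass '' ↑N.complexes).ncard := by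
  unfold numLinkage
  congr 1
  ext S
  simp only [Set.mem_setOf_eq, Set.mem_image, Finset.mem_coe]
  constructor
  · rintro ⟨c, hc, rfl⟩; exact ⟨c, hc, rfl⟩
  · rintro ⟨c, hc, rfl⟩; exact ⟨c, hc, rfl⟩

lemma complexes_insert {N N' : Network s} {C D : Cplx s}
    (h : N'.reactions = insert (C, D) N.reactions) :
    N'.complexes = insert C (insert D N.complexes) := by
  simp only [complexes, h, Finset.image_insert, Finset.insert_union, Finset.union_insert]
  exact Finset.insert_comm _ _ _

lemma linked_mono {N N' : Network s} (hsub : N.reactions ⊆ N'.reactions)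
    {X Y : Cplx s} (h : N.linked X Y) : N'.linked X Y :=
  by
    induction h with
    | refl => exact .refl
    | tail _ hab ih => exact ih.tail (hab.imp (fun hh => hsub hh) (fun hh => hsub hh))

lemma linked_insert_iff {N N' : Network s} {C D : Cplx s}
    (h : N'.reactions = insert (C, D) N.reactions) (X Y : Cplx s) :
    N'.linked X Y ↔ N.linked X Y ∨ (N.linked X C ∧ N.linked D Y) ∨
      (N.linked X D ∧ N.linked C Y) := by
  have hsub : N.reactions ⊆ N'.reactions := by rw [h]; exact Finset.subset_insert _ _
  constructor
  · intro hl
    induction hl with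
    | refl => exact Or.inl .refl
    | @tail b c h1 h2 ih =>
      have h2' : N.step b c ∨ (b = C ∧ c = D) ∨ (b = D ∧ c = C) := by
        rcases h2 with h2 | h2 <;> rw [h] at h2 <;>
          rcases Finset.mem_insert.mp h2 with h2 | h2
        · exact Or.inr (Or.inl ⟨congrArg Prod.fst h2, congrArg Prod.snd h2⟩)
        · exact Or.inl (Or.inl h2)
        · exact Or.inr (Or.inr ⟨congrArg Prod.snd h2, congrArg Prod.fst h2⟩)
        · exact Or.inl (Or.inr h2)
      rcases h2' with h2' | ⟨rfl, rfl⟩ | ⟨rfl, rfl⟩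
      · have e : N.linked b c := Relation.ReflTransGen.single h2'
        rcases ih with ih | ⟨h3, h4⟩ | ⟨h3, h4⟩
        · exact Or.inl (ih.trans e)
        · exact Or.inr (Or.inl ⟨h3, h4.trans e⟩)
        · exact Or.inr (Or.inr ⟨h3, h4.trans e⟩)
      · rcases ih with ih | ⟨h3, _⟩ | ⟨h3, _⟩
        · exact Or.inr (Or.inl ⟨ih, .refl⟩)
        · exact Or.inr (Or.inl ⟨h3, .refl⟩)
        · exact Or.inl h3
      · rcases ih with ih | ⟨h3, _⟩ | ⟨h3, _⟩
        · exact Or.inr (Or.inr ⟨ih, .refl⟩)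
        · exact Or.inl h3
        · exact Or.inr (Or.inr ⟨h3, .refl⟩)
  · have hCD' : N'.linked C D :=
      Relation.ReflTransGen.single (Or.inl (by rw [h]; exact Finset.mem_insert_self _ _))
    rintro (hl | ⟨h1, h2⟩ | ⟨h1, h2⟩)
    · exact linked_mono hsub hl
    · exact ((linked_mono hsub h1).trans hCD').trans (linked_mono hsub h2)
    · exact ((linked_mono hsub h1).trans (linked_symm hCD')).trans (linked_mono hsub h2)

end Network

theorem stmt5 {s : ℕ} (N N' : Network s) (C D : Cplx s) (hCD : C ≠ D)
    (hnew : (C, D) ∉ N.reactions)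
    (h : N'.reactions = insert (C, D) N.reactions)
    (hrk : N'.rank = N.rank) :
    (N.sameLinkageClass C D → N'.deficiency = N.deficiency) ∧
    (¬ N.sameLinkageClass C D → N'.deficiency = N.deficiency + 1) := by
  have hli := Network.linked_insert_iff h
  have hco := Network.complexes_insert h
  constructor
  · rintro ⟨hC, hD, hl⟩
    have hclass : N'.linkageClass = N.linkageClass := by
      funext X
      ext Y
      show N'.linked X Y ↔ N.linked X Y
      rw [hli]
      constructor
      · rintro (h1 | ⟨h1, h2⟩ | ⟨h1, h2⟩)
        · exact h1
        · exact (h1.trans hl).trans h2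
        · exact (h1.trans (Network.linked_symm hl)).trans h2
      · exact Or.inl
    have hcompl : N'.complexes = N.complexes := by
      rw [hco, Finset.insert_eq_self.mpr hD, Finset.insert_eq_self.mpr hC]
    have h1 : N'.numLinkage = N.numLinkage := by
      unfold Network.numLinkage
      rw [hcompl, hclass]
    have h2 : N'.numComplexes = N.numComplexes := by
      unfold Network.numComplexes; rw [hcompl]
    unfold Network.deficiency
    rw [h1, h2, hrk]
  · intro hns
    have hnl : ¬ N.linked C D := fun hl =>
      hns ⟨Network.linked_mem (Network.linked_symm hl) hCD.symm,
           Network.linked_mem hl hCD, hl⟩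
    set A : Set (Cplx s) := {X | X ∈ N.complexes ∧ ¬N.linked X C ∧ ¬N.linked X D} with hAdef
    set U : Set (Cplx s) := N.linkageClass C ∪ N.linkageClass D with hUdef
    have hAfin : (N.linkageClass '' A).Finite :=
      (N.complexes.finite_toSet.subset (fun x hx => hx.1)).image _
    have hCU : C ∈ U := Or.inl Relation.ReflTransGen.refl
    have hUA : U ∉ N.linkageClass '' A := by
      rintro ⟨X, hX, hXU⟩
      have : C ∈ N.linkageClass X := by rw [hXU]; exact hCU
      exact hX.2.1 this
    have hfC : ∀ X, N.linked X C ∨ N.linked X D → N'.linkageClass X = U := by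
      intro X hX
      ext Y
      show N'.linked X Y ↔ Y ∈ N.linkageClass C ∪ N.linkageClass D
      rw [hli, Set.mem_union]
      show _ ↔ N.linked C Y ∨ N.linked D Y
      rcases hX with hXC | hXD
      · have hnXD : ¬ N.linked X D := fun hXD => hnl ((Network.linked_symm hXC).trans hXD)
        constructor
        · rintro (h1 | ⟨_, h2⟩ | ⟨h1, _⟩)
          · exact Or.inl ((Network.linked_symm hXC).trans h1)
          · exact Or.inr h2
          · exact absurd h1 hnXD
        · rintro (h1 | h1)
          · exact Or.inl (hXC.trans h1)
          · exact Or.inr (Or.inl ⟨hXC, h1⟩)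
      · have hnXC : ¬ N.linked X C := fun hXC => hnl ((Network.linked_symm hXC).trans hXD)
        constructor
        · rintro (h1 | ⟨h1, _⟩ | ⟨_, h2⟩)
          · exact Or.inr ((Network.linked_symm hXD).trans h1)
          · exact absurd h1 hnXC
          · exact Or.inl h2
        · rintro (h1 | h1)
          · exact Or.inr (Or.inr ⟨hXD, h1⟩)
          · exact Or.inl (hXD.trans h1)
    have hfA : ∀ X, X ∈ A → N'.linkageClass X = N.linkageClass X := by
      intro X hX
      ext Y
      show N'.linked X Y ↔ N.linked X Y
      rw [hli]
      constructor
      · rintro (h1 | ⟨h1, _⟩ | ⟨h1, _⟩)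
        · exact h1
        · exact absurd h1 hX.2.1
        · exact absurd h1 hX.2.2
      · exact Or.inl
    have hL' : N'.linkageClass '' ↑N'.complexes = insert U (N.linkageClass '' A) := by
      ext S
      simp only [Set.mem_insert_iff, Set.mem_image, Finset.mem_coe]
      constructor
      · rintro ⟨X, hX, rfl⟩
        by_cases hb : N.linked X C ∨ N.linked X D
        · exact Or.inl (hfC X hb)
        · push_neg at hb
          have hXmem : X ∈ N.complexes := by
            rw [hco] at hX
            rcases Finset.mem_insert.mp hX with rfl | hX
            · exact absurd Relation.ReflTransGen.refl hb.1
            · rcases Finset.mem_insert.mp hX with rfl | hX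
              · exact absurd Relation.ReflTransGen.refl hb.2
              · exact hX
          exact Or.inr ⟨X, ⟨hXmem, hb.1, hb.2⟩, (hfA X ⟨hXmem, hb.1, hb.2⟩).symm⟩
      · rintro (rfl | ⟨X, hXA, rfl⟩)
        · exact ⟨C, by rw [hco]; exact Finset.mem_insert_self _ _, hfC C (Or.inl .refl)⟩
        · refine ⟨X, ?_, hfA X hXA⟩
          rw [hco]
          exact Finset.mem_insert_of_mem (Finset.mem_insert_of_mem hXA.1)
    have hl'card : N'.numLinkage = (N.linkageClass '' A).ncard + 1 := by
      rw [Network.numLinkage_eq_image, hL', Set.ncard_insert_of_notMem hUA hAfin]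
    have hCA : N.linkageClass C ∉ N.linkageClass '' A := by
      rintro ⟨X, hX, hXE⟩
      have : C ∈ N.linkageClass X := by rw [hXE]; exact Relation.ReflTransGen.refl
      exact hX.2.1 this
    have hDA : N.linkageClass D ∉ N.linkageClass '' A := by
      rintro ⟨X, hX, hXE⟩
      have : D ∈ N.linkageClass X := by rw [hXE]; exact Relation.ReflTransGen.refl
      exact hX.2.2 this
    by_cases hCm : C ∈ N.complexes <;> by_cases hDm : D ∈ N.complexes
    · -- both complexes, not linked
      have hL : N.linkageClass '' ↑N.complexes =
          insert (N.linkageClass C) (insert (N.linkageClass D) (N.linkageClass '' A)) := by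
        ext S
        simp only [Set.mem_insert_iff, Set.mem_image, Finset.mem_coe]
        constructor
        · rintro ⟨X, hX, rfl⟩
          by_cases h1 : N.linked X C
          · exact Or.inl (Network.linkageClass_eq h1)
          · by_cases h2 : N.linked X D
            · exact Or.inr (Or.inl (Network.linkageClass_eq h2))
            · exact Or.inr (Or.inr ⟨X, ⟨hX, h1, h2⟩, rfl⟩)
        · rintro (rfl | rfl | ⟨X, hX, rfl⟩)
          · exact ⟨C, hCm, rfl⟩
          · exact ⟨D, hDm, rfl⟩
          · exact ⟨X, hX.1, rfl⟩
      have hCneD : N.linkageClass C ≠ N.linkageClass D := by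
        intro he
        have : D ∈ N.linkageClass C := by rw [he]; exact Relation.ReflTransGen.refl
        exact hnl this
      have hlc : N.numLinkage = (N.linkageClass '' A).ncard + 2 := by
        rw [Network.numLinkage_eq_image, hL,
          Set.ncard_insert_of_notMem (by
            simp only [Set.mem_insert_iff]
            rintro (he | he)
            · exact hCneD he
            · exact hCA he) (hAfin.insert _),
          Set.ncard_insert_of_notMem hDA hAfin]
      have hcc : N'.numComplexes = N.numComplexes := by
        unfold Network.numComplexes
        rw [hco, Finset.insert_eq_self.mpr hDm, Finset.insert_eq_self.mpr hCm]
      simp only [Network.deficiency, hrk, hl'card, hlc, hcc]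
      push_cast; ring
    · -- C a complex, D not
      have hnD : ∀ X ∈ N.complexes, ¬ N.linked X D := by
        intro X hX hl
        have hXD : X ≠ D := fun he => hDm (he ▸ hX)
        exact hDm (Network.linked_mem hl hXD)
      have hL : N.linkageClass '' ↑N.complexes =
          insert (N.linkageClass C) (N.linkageClass '' A) := by
        ext S
        simp only [Set.mem_insert_iff, Set.mem_image, Finset.mem_coe]
        constructor
        · rintro ⟨X, hX, rfl⟩
          by_cases h1 : N.linked X C
          · exact Or.inl (Network.linkageClass_eq h1)
          · exact Or.inr ⟨X, ⟨hX, h1, hnD X hX⟩, rfl⟩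
        · rintro (rfl | ⟨X, hX, rfl⟩)
          · exact ⟨C, hCm, rfl⟩
          · exact ⟨X, hX.1, rfl⟩
      have hlc : N.numLinkage = (N.linkageClass '' A).ncard + 1 := by
        rw [Network.numLinkage_eq_image, hL, Set.ncard_insert_of_notMem hCA hAfin]
      have hcc : N'.numComplexes = N.numComplexes + 1 := by
        unfold Network.numComplexes
        rw [hco, Finset.insert_eq_self.mpr (Finset.mem_insert_of_mem hCm),
          Finset.card_insert_of_notMem hDm]
      simp only [Network.deficiency, hrk, hl'card, hlc, hcc]
      push_cast; ring
    · -- D a complex, C not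
      have hnC : ∀ X ∈ N.complexes, ¬ N.linked X C := by
        intro X hX hl
        have hXC : X ≠ C := fun he => hCm (he ▸ hX)
        exact hCm (Network.linked_mem hl hXC)
      have hL : N.linkageClass '' ↑N.complexes =
          insert (N.linkageClass D) (N.linkageClass '' A) := by
        ext S
        simp only [Set.mem_insert_iff, Set.mem_image, Finset.mem_coe]
        constructor
        · rintro ⟨X, hX, rfl⟩
          by_cases h2 : N.linked X D
          · exact Or.inl (Network.linkageClass_eq h2)
          · exact Or.inr ⟨X, ⟨hX, hnC X hX, h2⟩, rfl⟩
        · rintro (rfl | ⟨X, hX, rfl⟩)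
          · exact ⟨D, hDm, rfl⟩
          · exact ⟨X, hX.1, rfl⟩
      have hlc : N.numLinkage = (N.linkageClass '' A).ncard + 1 := by
        rw [Network.numLinkage_eq_image, hL, Set.ncard_insert_of_notMem hDA hAfin]
      have hcc : N'.numComplexes = N.numComplexes + 1 := by
        unfold Network.numComplexes
        rw [hco, Finset.insert_eq_self.mpr hDm, Finset.card_insert_of_notMem hCm]
      simp only [Network.deficiency, hrk, hl'card, hlc, hcc]
      push_cast; ring
    · -- neither is a complex
      have hnC : ∀ X ∈ N.complexes, ¬ N.linked X C := by
        intro X hX hl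
        have hXC : X ≠ C := fun he => hCm (he ▸ hX)
        exact hCm (Network.linked_mem hl hXC)
      have hnD : ∀ X ∈ N.complexes, ¬ N.linked X D := by
        intro X hX hl
        have hXD : X ≠ D := fun he => hDm (he ▸ hX)
        exact hDm (Network.linked_mem hl hXD)
      have hAeq : A = ↑N.complexes := by
        ext X
        exact ⟨fun hx => hx.1, fun hx => ⟨hx, hnC X hx, hnD X hx⟩⟩
      have hlc : N.numLinkage = (N.linkageClass '' A).ncard := by
        rw [Network.numLinkage_eq_image, hAeq]
      have hcc : N'.numComplexes = N.numComplexes + 2 := by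
        unfold Network.numComplexes
        rw [hco, Finset.card_insert_of_notMem (by
            simp only [Finset.mem_insert]
            rintro (rfl | hm)
            · exact hCD rfl
            · exact hCm hm),
          Finset.card_insert_of_notMem hDm]
      simp only [Network.deficiency, hrk, hl'card, hlc, hcc]
      push_cast; ring
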